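/- Let f : ℝ^d → ℝ be convex and let X ⊆ ℝ^d be a nonempty closed convex set. Then the closure of the set {g ∈ ℝ^d : g is a subgradient of f at some x ∈ X relative to X} is a convex set. -/

import Mathlib

open scoped RealInnerProductSpace

theorem aux_mem_closure {d : ℕ} (f : EuclideanSpace ℝ (Fin d) → ℝ)
    (hf : ConvexOn ℝ Set.univ f) (X : Set (EuclideanSpace ℝ (Fin d)))
    (hXcl : IsClosed X) (hXconv : Convex ℝ X)
    (x₁ : EuclideanSpace ℝ (Fin d)) (hx₁ : x₁ ∈ X)
    (g : EuclideanSpace ℝ (Fin d)) (C : ℝ)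
    (hC : ∀ x ∈ X, C ≤ f x - ⟪g, x⟫) :
    g ∈ closure {g : EuclideanSpace ℝ (Fin d) |
      ∃ x ∈ X, ∀ y ∈ X, f x + ⟪g, y - x⟫ ≤ f y} := by
  have hfc : Continuous f := by
    rw [← continuousOn_univ]
    exact hf.continuousOn isOpen_univ
  rw [Metric.mem_closure_iff]
  intro ε hε
  obtain ⟨M, hM⟩ : ∃ M : ℝ, M = f x₁ - ⟪g, x₁⟫ + ‖x₁‖ ^ 2 / 2 := ⟨_, rfl⟩
  have hMC : C ≤ M := by
    have h1 := hC x₁ hx₁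
    have h2 : (0:ℝ) ≤ ‖x₁‖ ^ 2 / 2 := by positivity
    linarith
  obtain ⟨δ, hδdef⟩ : ∃ δ : ℝ, δ = min 1 (ε ^ 2 / (2 * (M - C) + 1)) := ⟨_, rfl⟩
  have hδpos : 0 < δ := by
    rw [hδdef]
    exact lt_min one_pos (div_pos (pow_pos hε 2) (by linarith))
  have hδ1 : δ ≤ 1 := hδdef ▸ min_le_left _ _
  have hδ2 : δ * (2 * (M - C)) < ε ^ 2 := by
    have h1 : δ ≤ ε ^ 2 / (2 * (M - C) + 1) := hδdef ▸ min_le_right _ _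
    have h2 : (0:ℝ) < 2 * (M - C) + 1 := by linarith
    rw [le_div_iff₀ h2] at h1
    nlinarith
  obtain ⟨φ, hφ⟩ : ∃ φ : EuclideanSpace ℝ (Fin d) → ℝ,
      φ = fun x => f x - ⟪g, x⟫ + δ / 2 * ‖x‖ ^ 2 := ⟨_, rfl⟩
  have hφx : ∀ x, φ x = f x - ⟪g, x⟫ + δ / 2 * ‖x‖ ^ 2 := fun x => by rw [hφ]
  have hφc : Continuous φ := by
    rw [hφ]
    exact (hfc.sub (continuous_const.inner continuous_id)).add
      (continuous_const.mul (continuous_norm.pow 2))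
  obtain ⟨K, hK⟩ : ∃ K : Set (EuclideanSpace ℝ (Fin d)),
      K = X ∩ {x | φ x ≤ φ x₁} := ⟨_, rfl⟩
  have hKmem : ∀ x, x ∈ K ↔ x ∈ X ∧ φ x ≤ φ x₁ := fun x => by
    rw [hK]; exact Iff.rfl
  have hKcl : IsClosed K := hK ▸ hXcl.inter (isClosed_le hφc continuous_const)
  have hx₁K : x₁ ∈ K := (hKmem x₁).mpr ⟨hx₁, le_refl _⟩
  have hKsub : K ⊆ Metric.closedBall 0 (Real.sqrt (2 * (φ x₁ - C) / δ)) := by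
    intro x hx
    obtain ⟨hxX, hxφ⟩ := (hKmem x).mp hx
    simp only [Metric.mem_closedBall, dist_zero_right]
    have hCx := hC x hxX
    have hφx2 : δ / 2 * ‖x‖ ^ 2 ≤ φ x₁ - C := by
      rw [hφx x] at hxφ; linarith
    have h1 : ‖x‖ ^ 2 ≤ 2 * (φ x₁ - C) / δ := by
      rw [le_div_iff₀ hδpos]; nlinarith
    rw [← Real.sqrt_sq (norm_nonneg x)]
    exact Real.sqrt_le_sqrt h1
  have hKcomp : IsCompact K :=
    (isCompact_closedBall _ _).of_isClosed_subset hKcl hKsub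
  obtain ⟨z, hzK, hzmin⟩ := hKcomp.exists_isMinOn ⟨x₁, hx₁K⟩ hφc.continuousOn
  have hzX : z ∈ X := ((hKmem z).mp hzK).1
  have hzx₁ : φ z ≤ φ x₁ := hzmin hx₁K
  have hzminX : ∀ y ∈ X, φ z ≤ φ y := by
    intro y hy
    by_cases h : φ y ≤ φ x₁
    · exact hzmin ((hKmem y).mpr ⟨hy, h⟩)
    · push_neg at h; linarith
  have hsub : ∀ y ∈ X, f z + ⟪g - δ • z, y - z⟫ ≤ f y := by
    intro y hy
    apply le_of_forall_pos_le_add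
    intro η hη
    obtain ⟨t, htdef⟩ : ∃ t : ℝ, t = min 1 (η / (δ / 2 * ‖y - z‖ ^ 2 + 1)) := ⟨_, rfl⟩
    have hden : (0:ℝ) < δ / 2 * ‖y - z‖ ^ 2 + 1 := by positivity
    have htpos : 0 < t := by
      rw [htdef]
      exact lt_min one_pos (div_pos hη hden)
    have ht1 : t ≤ 1 := htdef ▸ min_le_left _ _
    have htη : δ / 2 * t * ‖y - z‖ ^ 2 ≤ η := by
      have h1 : t ≤ η / (δ / 2 * ‖y - z‖ ^ 2 + 1) := htdef ▸ min_le_right _ _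
      rw [le_div_iff₀ hden] at h1
      nlinarith [sq_nonneg ‖y - z‖, hδpos.le, hη.le]
    obtain ⟨w, hw⟩ : ∃ w : EuclideanSpace ℝ (Fin d), w = z + t • (y - z) := ⟨_, rfl⟩
    have heq : (1 - t) • z + t • y = w := by
      rw [hw, smul_sub, sub_smul, one_smul]; abel
    have hwX : w ∈ X := by
      rw [← heq]
      exact hXconv hzX hy (by linarith) htpos.le (by ring)
    have hfw : f w ≤ (1 - t) * f z + t * f y := by
      have h := hf.2 (Set.mem_univ z) (Set.mem_univ y) (by linarith : (0:ℝ) ≤ 1 - t)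
        htpos.le (by ring)
      rw [heq] at h
      simpa using h
    have hφzw := hzminX w hwX
    have hiw : ⟪g, w⟫ = ⟪g, z⟫ + t * ⟪g, y - z⟫ := by
      rw [hw, inner_add_right, real_inner_smul_right]
    have hnw : ‖w‖ ^ 2 = ‖z‖ ^ 2 + 2 * (t * ⟪z, y - z⟫) + t ^ 2 * ‖y - z‖ ^ 2 := by
      rw [hw, norm_add_sq_real, real_inner_smul_right, norm_smul, mul_pow,
        Real.norm_eq_abs, sq_abs]
    have key : t * f z ≤ t * (f y - ⟪g, y - z⟫ + δ * ⟪z, y - z⟫ + δ / 2 * t * ‖y - z‖ ^ 2) := by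
      rw [hφx z, hφx w, hiw, hnw] at hφzw
      nlinarith
    have key2 : f z ≤ f y - ⟪g, y - z⟫ + δ * ⟪z, y - z⟫ + δ / 2 * t * ‖y - z‖ ^ 2 :=
      le_of_mul_le_mul_left key htpos
    have hig : ⟪g - δ • z, y - z⟫ = ⟪g, y - z⟫ - δ * ⟪z, y - z⟫ := by
      rw [inner_sub_left, real_inner_smul_left]
    rw [hig]
    linarith
  refine ⟨g - δ • z, ⟨z, hzX, hsub⟩, ?_⟩
  have hdist : dist g (g - δ • z) = δ * ‖z‖ := by
    rw [dist_eq_norm, sub_sub_cancel, norm_smul, Real.norm_eq_abs, abs_of_pos hδpos]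
  rw [hdist]
  have hφx₁M : φ x₁ ≤ M := by
    rw [hφx x₁, hM]
    nlinarith [sq_nonneg ‖x₁‖]
  have hb : δ / 2 * ‖z‖ ^ 2 ≤ M - C := by
    have h1 := hC z hzX
    rw [hφx z] at hzx₁
    linarith
  have hsq : (δ * ‖z‖) ^ 2 < ε ^ 2 := by nlinarith [hδpos.le, norm_nonneg z]
  exact lt_of_pow_lt_pow_left₀ 2 hε.le hsq

theorem segment_mem_closure {d : ℕ}
    (f : EuclideanSpace ℝ (Fin d) → ℝ) (hf : ConvexOn ℝ Set.univ f)
    (X : Set (EuclideanSpace ℝ (Fin d)))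
    (hXcl : IsClosed X) (hXconv : Convex ℝ X)
    (g₁ g₂ : EuclideanSpace ℝ (Fin d))
    (hg₁ : g₁ ∈ {g : EuclideanSpace ℝ (Fin d) | ∃ x ∈ X, ∀ y ∈ X, f x + ⟪g, y - x⟫ ≤ f y})
    (hg₂ : g₂ ∈ {g : EuclideanSpace ℝ (Fin d) | ∃ x ∈ X, ∀ y ∈ X, f x + ⟪g, y - x⟫ ≤ f y})
    (a b : ℝ) (ha : 0 ≤ a) (hb : 0 ≤ b) (hab : a + b = 1) :
    a • g₁ + b • g₂ ∈ closure {g : EuclideanSpace ℝ (Fin d) |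
      ∃ x ∈ X, ∀ y ∈ X, f x + ⟪g, y - x⟫ ≤ f y} := by
  obtain ⟨x₁, hx₁, h₁⟩ := hg₁
  obtain ⟨x₂, hx₂, h₂⟩ := hg₂
  apply aux_mem_closure f hf X hXcl hXconv x₁ hx₁
    (C := a * (f x₁ - ⟪g₁, x₁⟫) + b * (f x₂ - ⟪g₂, x₂⟫))
  intro x hx
  have hi1 := h₁ x hx
  have hi2 := h₂ x hx
  rw [inner_sub_right] at hi1 hi2
  have hg : ⟪a • g₁ + b • g₂, x⟫ = a * ⟪g₁, x⟫ + b * ⟪g₂, x⟫ := by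
    rw [inner_add_left, real_inner_smul_left, real_inner_smul_left]
  rw [hg]
  have e : a * f x + b * f x = f x := by rw [← add_mul, hab, one_mul]
  linarith [mul_le_mul_of_nonneg_left hi1 ha, mul_le_mul_of_nonneg_left hi2 hb, e]

/-- The closure of the set of subgradients of a convex function `f` at points of a
nonempty closed convex set `X` (subgradients relative to `X`) is convex. -/
theorem closure_of_subgradient_set_convex {d : ℕ}
    (f : EuclideanSpace ℝ (Fin d) → ℝ) (hf : ConvexOn ℝ Set.univ f)
    (X : Set (EuclideanSpace ℝ (Fin d)))
    (hXne : X.Nonempty) (hXcl : IsClosed X) (hXconv : Convex ℝ X) :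
    Convex ℝ (closure {g : EuclideanSpace ℝ (Fin d) |
      ∃ x ∈ X, ∀ y ∈ X, f x + ⟪g, y - x⟫ ≤ f y}) := by
  intro p hp q hq a b ha hb hab
  obtain ⟨u, hu, hulim⟩ := mem_closure_iff_seq_limit.mp hp
  obtain ⟨v, hv, hvlim⟩ := mem_closure_iff_seq_limit.mp hq
  have hmem : ∀ n, a • u n + b • v n ∈ closure {g : EuclideanSpace ℝ (Fin d) |
      ∃ x ∈ X, ∀ y ∈ X, f x + ⟪g, y - x⟫ ≤ f y} := fun n =>
    segment_mem_closure f hf X hXcl hXconv (u n) (v n) (hu n) (hv n) a b ha hb hab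
  have htend : Filter.Tendsto (fun n => a • u n + b • v n) Filter.atTop (nhds (a • p + b • q)) :=
    (hulim.const_smul a).add (hvlim.const_smul b)
  exact isClosed_closure.mem_of_tendsto htend (Filter.Eventually.of_forall hmem)
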